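/- arXiv:0903.2679 — 11 statements merged into one kernel-verified Lean document; each statement's English description precedes it below -/
import Mathlib

section
/- Let P be a finite partially ordered set and let v : P → ℝ be a strictly isotone lower valuation. Then the function d_v(x,y) = v(x) + v(y) − 2·v⁻(x,y) is a metric on P: it is nonnegative, symmetric, satisfies the triangle inequality d_v(x,z) ≤ d_v(x,y) + d_v(y,z), and d_v(x,y) = 0 if and only if x = y. -/
/-- If `v` is a strictly isotone lower valuation on a finite poset `P`,
then `d_v(x,y) = v x + v y - 2 * v⁻(x,y)` is a metric on `P`, where
`v⁻(x,y) = sup {v w : w ≤ x ∧ w ≤ y}`. -/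
theorem stmt_0 {P : Type*} [Fintype P] [PartialOrder P] (v : P → ℝ)
    (hstrict : ∀ x y : P, x < y → v x < v y)
    (hlb : ∀ x y : P, ∃ w : P, w ≤ x ∧ w ≤ y)
    (hval : ∀ x y z : P, x ≤ z → y ≤ z →
      v x + v y ≤ sSup (v '' {w | w ≤ x ∧ w ≤ y}) + v z)
    (d : P → P → ℝ)
    (hd : ∀ x y : P, d x y = v x + v y - 2 * sSup (v '' {w | w ≤ x ∧ w ≤ y})) :
    (∀ x y : P, 0 ≤ d x y) ∧
    (∀ x y : P, d x y = d y x) ∧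
    (∀ x y z : P, d x z ≤ d x y + d y z) ∧
    (∀ x y : P, d x y = 0 ↔ x = y) := by
  have hmono : ∀ x y : P, x ≤ y → v x ≤ v y := by
    intro x y h
    rcases lt_or_eq_of_le h with h | h
    · exact le_of_lt (hstrict _ _ h)
    · exact le_of_eq (congrArg v h)
  -- the sup is attained
  have hattain : ∀ x y : P, ∃ w : P, w ≤ x ∧ w ≤ y ∧
      v w = sSup (v '' {w | w ≤ x ∧ w ≤ y}) := by
    intro x y
    obtain ⟨w0, hw0⟩ := hlb x y
    have hne : (v '' {w | w ≤ x ∧ w ≤ y}).Nonempty := ⟨v w0, w0, hw0, rfl⟩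
    have hfin : (v '' {w | w ≤ x ∧ w ≤ y}).Finite := Set.toFinite _
    have := hne.csSup_mem hfin
    obtain ⟨w, hw, hvw⟩ := this
    exact ⟨w, hw.1, hw.2, hvw⟩
  have hbdd : ∀ x y : P, BddAbove (v '' {w | w ≤ x ∧ w ≤ y}) :=
    fun x y => (Set.toFinite _).bddAbove
  have hle : ∀ x y : P, sSup (v '' {w | w ≤ x ∧ w ≤ y}) ≤ v x ∧
      sSup (v '' {w | w ≤ x ∧ w ≤ y}) ≤ v y := by
    intro x y
    obtain ⟨w, hwx, hwy, hvw⟩ := hattain x y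
    exact ⟨hvw ▸ hmono _ _ hwx, hvw ▸ hmono _ _ hwy⟩
  have hsymm : ∀ x y : P, {w | w ≤ x ∧ w ≤ y} = {w | w ≤ y ∧ w ≤ x} := by
    intro x y; ext w; exact and_comm
  refine ⟨?_, ?_, ?_, ?_⟩
  · intro x y
    rw [hd]
    have := (hle x y).1
    have := (hle x y).2
    linarith
  · intro x y
    rw [hd, hd, hsymm x y]
    ring
  · intro x y z
    rw [hd, hd, hd]
    obtain ⟨a, hax, hay, hva⟩ := hattain x y
    obtain ⟨b, hby, hbz, hvb⟩ := hattain y z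
    have key : v a + v b ≤ sSup (v '' {w | w ≤ a ∧ w ≤ b}) + v y :=
      hval a b y hay hby
    have hsub : sSup (v '' {w | w ≤ a ∧ w ≤ b}) ≤
        sSup (v '' {w | w ≤ x ∧ w ≤ z}) := by
      obtain ⟨w0, hw0⟩ := hlb a b
      apply csSup_le_csSup (hbdd x z) (⟨v w0, w0, hw0, rfl⟩ : (v '' {w | w ≤ a ∧ w ≤ b}).Nonempty)
      rintro _ ⟨w, ⟨hwa, hwb⟩, rfl⟩
      exact ⟨w, ⟨hwa.trans hax, hwb.trans hbz⟩, rfl⟩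
    linarith [hva, hvb]
  · intro x y
    rw [hd]
    constructor
    · intro h
      obtain ⟨w, hwx, hwy, hvw⟩ := hattain x y
      have h1 := (hle x y).1
      have h2 := (hle x y).2
      have hvx : sSup (v '' {w | w ≤ x ∧ w ≤ y}) = v x := by linarith
      have hvy : sSup (v '' {w | w ≤ x ∧ w ≤ y}) = v y := by linarith
      have hwx' : w = x := by
        rcases lt_or_eq_of_le hwx with h' | h'
        · exact absurd (hstrict _ _ h') (by rw [hvw, hvx]; exact lt_irrefl _)
        · exact h'
      have hwy' : w = y := by
        rcases lt_or_eq_of_le hwy with h' | h'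
        · exact absurd (hstrict _ _ h') (by rw [hvw, hvy]; exact lt_irrefl _)
        · exact h'
      exact hwx' ▸ hwy'
    · rintro rfl
      have : sSup (v '' {w | w ≤ x ∧ w ≤ x}) = v x := by
        apply le_antisymm (hle x x).1
        exact le_csSup (hbdd x x) ⟨x, ⟨le_refl x, le_refl x⟩, rfl⟩
      rw [this]; ring
end

section
/- Let P be a finite partially ordered set and let v : P → ℝ be a strictly antitone lower valuation. Then the function d_v(x,y) = v(x) + v(y) − 2·v⁺(x,y) is a metric on P: it is nonnegative, symmetric, satisfies the triangle inequality, and d_v(x,y) = 0 if and only if x = y. -/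
/-- If `v` is a strictly antitone lower valuation on a finite poset `P`,
then `d_v(x,y) = v x + v y - 2 * v⁺(x,y)` is a metric on `P`, where
`v⁺(x,y) = sup {v w : x ≤ w ∧ y ≤ w}`. -/
theorem stmt_1 {P : Type*} [Fintype P] [PartialOrder P] (v : P → ℝ)
    (hstrict : ∀ x y : P, x < y → v y < v x)
    (hub : ∀ x y : P, ∃ w : P, x ≤ w ∧ y ≤ w)
    (hval : ∀ x y z : P, z ≤ x → z ≤ y →
      v x + v y ≤ v z + sSup (v '' {w | x ≤ w ∧ y ≤ w}))
    (d : P → P → ℝ)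
    (hd : ∀ x y : P, d x y = v x + v y - 2 * sSup (v '' {w | x ≤ w ∧ y ≤ w})) :
    (∀ x y : P, 0 ≤ d x y) ∧
    (∀ x y : P, d x y = d y x) ∧
    (∀ x y z : P, d x z ≤ d x y + d y z) ∧
    (∀ x y : P, d x y = 0 ↔ x = y) := by
  have hmono : ∀ {x w : P}, x ≤ w → v w ≤ v x := by
    intro x w h
    rcases h.lt_or_eq with h | h
    · exact (hstrict _ _ h).le
    · rw [h]
  have key : ∀ x y : P, ∃ w : P, x ≤ w ∧ y ≤ w ∧
      sSup (v '' {w | x ≤ w ∧ y ≤ w}) = v w := by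
    intro x y
    have hfin : (v '' {w | x ≤ w ∧ y ≤ w}).Finite := (Set.toFinite _).image _
    have hne : (v '' {w | x ≤ w ∧ y ≤ w}).Nonempty := by
      obtain ⟨w, h1, h2⟩ := hub x y
      exact ⟨v w, w, ⟨h1, h2⟩, rfl⟩
    obtain ⟨w, ⟨h1, h2⟩, hw⟩ := hne.csSup_mem hfin
    exact ⟨w, h1, h2, hw.symm⟩
  have hle : ∀ (x y w : P), x ≤ w → y ≤ w →
      v w ≤ sSup (v '' {w | x ≤ w ∧ y ≤ w}) := by
    intro x y w h1 h2
    exact le_csSup ((Set.toFinite _).image v).bddAbove ⟨w, ⟨h1, h2⟩, rfl⟩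
  refine ⟨?_, ?_, ?_, ?_⟩
  · intro x y
    obtain ⟨w, h1, h2, hw⟩ := key x y
    have := hmono h1
    have := hmono h2
    rw [hd, hw]; linarith
  · intro x y
    rw [hd, hd]
    have : {w | x ≤ w ∧ y ≤ w} = {w | y ≤ w ∧ x ≤ w} := by
      ext w; exact and_comm
    rw [this]; ring
  · intro x y z
    obtain ⟨a, hxa, hya, ha⟩ := key x y
    obtain ⟨b, hyb, hzb, hb⟩ := key y z
    have hv := hval a b y hya hyb
    obtain ⟨c, hac, hbc, hc⟩ := key a b
    have h1 : v c ≤ sSup (v '' {w | x ≤ w ∧ z ≤ w}) :=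
      hle x z c (hxa.trans hac) (hzb.trans hbc)
    rw [hd, hd, hd, ha, hb]
    rw [hc] at hv
    linarith
  · intro x y
    constructor
    · intro h
      obtain ⟨w, h1, h2, hw⟩ := key x y
      rw [hd, hw] at h
      have h3 := hmono h1
      have h4 := hmono h2
      have hx : v x = v w := by linarith
      have hy : v y = v w := by linarith
      have ex : x = w := by
        by_contra hne
        exact absurd hx (hstrict _ _ (lt_of_le_of_ne h1 hne)).ne'
      have ey : y = w := by
        by_contra hne
        exact absurd hy (hstrict _ _ (lt_of_le_of_ne h2 hne)).ne'
      rw [ex, ey]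
    · rintro rfl
      obtain ⟨w, h1, _, hw⟩ := key x x
      have := hmono h1
      have := hle x x x le_rfl le_rfl
      rw [hd, hw]; linarith
end

section
/- Let P be a finite partially ordered set and let v : P → ℝ be a strictly isotone upper valuation. Then the function d_v(x,y) = 2·v⁺(x,y) − v(x) − v(y) is a metric on P: it is nonnegative, symmetric, satisfies the triangle inequality, and d_v(x,y) = 0 if and only if x = y. -/
/-- If `v` is a strictly isotone upper valuation on a finite poset `P`,
then `d_v(x,y) = 2 * v⁺(x,y) - v x - v y` is a metric on `P`, where
`v⁺(x,y) = inf {v w : x ≤ w ∧ y ≤ w}`. -/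
theorem stmt_2 {P : Type*} [Fintype P] [PartialOrder P] (v : P → ℝ)
    (hstrict : ∀ x y : P, x < y → v x < v y)
    (hub : ∀ x y : P, ∃ w : P, x ≤ w ∧ y ≤ w)
    (hval : ∀ x y z : P, z ≤ x → z ≤ y →
      sInf (v '' {w | x ≤ w ∧ y ≤ w}) + v z ≤ v x + v y)
    (d : P → P → ℝ)
    (hd : ∀ x y : P, d x y = 2 * sInf (v '' {w | x ≤ w ∧ y ≤ w}) - v x - v y) :
    (∀ x y : P, 0 ≤ d x y) ∧
    (∀ x y : P, d x y = d y x) ∧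
    (∀ x y z : P, d x z ≤ d x y + d y z) ∧
    (∀ x y : P, d x y = 0 ↔ x = y) := by
  have hmono : ∀ {a b : P}, a ≤ b → v a ≤ v b := by
    intro a b h
    rcases h.lt_or_eq with h | rfl
    · exact (hstrict _ _ h).le
    · exact le_rfl
  have hne : ∀ x y : P, (v '' {w | x ≤ w ∧ y ≤ w}).Nonempty := by
    intro x y; obtain ⟨w, h1, h2⟩ := hub x y; exact ⟨v w, w, ⟨h1, h2⟩, rfl⟩
  have hfin : ∀ x y : P, (v '' {w | x ≤ w ∧ y ≤ w}).Finite :=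
    fun x y => (Set.toFinite _).image _
  have hmem : ∀ x y : P, ∃ w : P, x ≤ w ∧ y ≤ w ∧
      v w = sInf (v '' {w | x ≤ w ∧ y ≤ w}) := by
    intro x y
    obtain ⟨w, ⟨h1, h2⟩, hw⟩ := (hne x y).csInf_mem (hfin x y)
    exact ⟨w, h1, h2, hw⟩
  have hge : ∀ x y : P, v x ≤ sInf (v '' {w | x ≤ w ∧ y ≤ w}) ∧
      v y ≤ sInf (v '' {w | x ≤ w ∧ y ≤ w}) := by
    intro x y
    constructor <;> refine le_csInf (hne x y) ?_ <;> rintro b ⟨w, ⟨h1, h2⟩, rfl⟩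
    · exact hmono h1
    · exact hmono h2
  have hsymm : ∀ x y : P, sInf (v '' {w | x ≤ w ∧ y ≤ w})
      = sInf (v '' {w | y ≤ w ∧ x ≤ w}) := by
    intro x y
    congr 1
    ext t
    simp only [Set.mem_image, Set.mem_setOf_eq]
    exact exists_congr fun w => by tauto
  refine ⟨?_, ?_, ?_, ?_⟩
  · intro x y
    have := hge x y
    rw [hd]
    linarith [this.1, this.2]
  · intro x y
    rw [hd, hd, hsymm]
    ring
  · intro x y z
    obtain ⟨a, hxa, hya, ha⟩ := hmem x y
    obtain ⟨b, hyb, hzb, hb⟩ := hmem y z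
    have key : sInf (v '' {w | a ≤ w ∧ b ≤ w}) + v y ≤ v a + v b :=
      hval a b y hya hyb
    have hsub : sInf (v '' {w | x ≤ w ∧ z ≤ w}) ≤ sInf (v '' {w | a ≤ w ∧ b ≤ w}) := by
      refine csInf_le_csInf ((hfin x z).bddBelow) (hne a b) ?_
      rintro t ⟨w, ⟨h1, h2⟩, rfl⟩
      exact ⟨w, ⟨hxa.trans h1, hzb.trans h2⟩, rfl⟩
    rw [hd, hd, hd]
    linarith
  · intro x y
    rw [hd]
    constructor
    · intro h0
      obtain ⟨w, hxw, hyw, hw⟩ := hmem x y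
      have h1 : v x ≤ v w := hmono hxw
      have h2 : v y ≤ v w := hmono hyw
      have hvx : v x = v w := by linarith [hw ▸ h0]
      have hvy : v y = v w := by linarith [hw ▸ h0]
      have hx : x = w := by
        rcases hxw.lt_or_eq with h | h
        · exact absurd hvx (hstrict _ _ h).ne
        · exact h
      have hy : y = w := by
        rcases hyw.lt_or_eq with h | h
        · exact absurd hvy (hstrict _ _ h).ne
        · exact h
      rw [hx, hy]
    · rintro rfl
      have hle : sInf (v '' {w | x ≤ w ∧ x ≤ w}) ≤ v x :=
        csInf_le ((hfin x x).bddBelow) ⟨x, ⟨le_rfl, le_rfl⟩, rfl⟩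
      have := (hge x x).1
      linarith
end

section
/- Let P be a finite partially ordered set and let v : P → ℝ be a strictly antitone upper valuation. Then the function d_v(x,y) = 2·v⁻(x,y) − v(x) − v(y) is a metric on P: it is nonnegative, symmetric, satisfies the triangle inequality, and d_v(x,y) = 0 if and only if x = y. -/
/-- If `v` is a strictly antitone upper valuation on a finite poset `P`,
then `d_v(x,y) = 2 * v⁻(x,y) - v x - v y` is a metric on `P`, where
`v⁻(x,y) = inf {v w : w ≤ x ∧ w ≤ y}`. -/
theorem stmt_3 {P : Type*} [Fintype P] [PartialOrder P] (v : P → ℝ)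
    (hstrict : ∀ x y : P, x < y → v y < v x)
    (hlb : ∀ x y : P, ∃ w : P, w ≤ x ∧ w ≤ y)
    (hval : ∀ x y z : P, x ≤ z → y ≤ z →
      sInf (v '' {w | w ≤ x ∧ w ≤ y}) + v z ≤ v x + v y)
    (d : P → P → ℝ)
    (hd : ∀ x y : P, d x y = 2 * sInf (v '' {w | w ≤ x ∧ w ≤ y}) - v x - v y) :
    (∀ x y : P, 0 ≤ d x y) ∧
    (∀ x y : P, d x y = d y x) ∧
    (∀ x y z : P, d x z ≤ d x y + d y z) ∧
    (∀ x y : P, d x y = 0 ↔ x = y) := by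
  set S : P → P → Set ℝ := fun x y => v '' {w | w ≤ x ∧ w ≤ y} with hS
  have hanti : ∀ x y : P, x ≤ y → v y ≤ v x := by
    intro x y h
    rcases eq_or_lt_of_le h with rfl | h
    · exact le_rfl
    · exact (hstrict x y h).le
  have hfin : ∀ x y : P, (S x y).Finite := fun x y => (Set.toFinite _).image v
  have hne : ∀ x y : P, (S x y).Nonempty := by
    intro x y
    obtain ⟨w, h1, h2⟩ := hlb x y
    exact ⟨v w, w, ⟨h1, h2⟩, rfl⟩
  have hle : ∀ (x y u : P), u ≤ x → u ≤ y → sInf (S x y) ≤ v u := by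
    intro x y u h1 h2
    exact csInf_le (hfin x y).bddBelow ⟨u, ⟨h1, h2⟩, rfl⟩
  have hmin : ∀ x y : P, ∃ w : P, w ≤ x ∧ w ≤ y ∧ v w = sInf (S x y) := by
    intro x y
    have := (hne x y).csInf_mem (hfin x y)
    obtain ⟨w, ⟨h1, h2⟩, h3⟩ := this
    exact ⟨w, h1, h2, h3⟩
  -- inf dominates v x and v y
  have hdom : ∀ x y : P, v x ≤ sInf (S x y) ∧ v y ≤ sInf (S x y) := by
    intro x y
    obtain ⟨w, h1, h2, h3⟩ := hmin x y
    exact ⟨h3 ▸ hanti w x h1, h3 ▸ hanti w y h2⟩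
  refine ⟨?_, ?_, ?_, ?_⟩
  · intro x y
    rw [hd]
    have h := hdom x y
    linarith [h.1, h.2]
  · intro x y
    rw [hd, hd]
    have : S x y = S y x := by
      ext r
      constructor
      · rintro ⟨w, ⟨h1, h2⟩, rfl⟩; exact ⟨w, ⟨h2, h1⟩, rfl⟩
      · rintro ⟨w, ⟨h1, h2⟩, rfl⟩; exact ⟨w, ⟨h2, h1⟩, rfl⟩
    show 2 * sInf (S x y) - v x - v y = 2 * sInf (S y x) - v y - v x
    rw [this]; ring
  · intro x y z
    rw [hd, hd, hd]
    obtain ⟨a, ha1, ha2, ha3⟩ := hmin x y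
    obtain ⟨b, hb1, hb2, hb3⟩ := hmin y z
    have key : sInf (S a b) + v y ≤ v a + v b := hval a b y ha2 hb1
    have hsub : sInf (S x z) ≤ sInf (S a b) := by
      apply le_csInf (hne a b)
      rintro r ⟨w, ⟨h1, h2⟩, rfl⟩
      exact hle x z w (h1.trans ha1) (h2.trans hb2)
    have := hsub.trans (by linarith : sInf (S a b) ≤ v a + v b - v y)
    rw [ha3, hb3] at this
    linarith
  · intro x y
    rw [hd]
    constructor
    · intro h0
      have hx := (hdom x y).1
      have hy := (hdom x y).2
      have hxy : sInf (S x y) = v x := by linarith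
      have hyx : sInf (S x y) = v y := by linarith
      obtain ⟨w, h1, h2, h3⟩ := hmin x y
      have hwx : w = x := by
        rcases eq_or_lt_of_le h1 with h | h
        · exact h
        · exact absurd (h3.trans hxy) (ne_of_gt (hstrict w x h))
      have hwy : w = y := by
        rcases eq_or_lt_of_le h2 with h | h
        · exact h
        · exact absurd (h3.trans hyx) (ne_of_gt (hstrict w y h))
      exact hwx ▸ hwy
    · rintro rfl
      have hx := (hdom x x).1
      have : sInf (S x x) ≤ v x := hle x x x le_rfl le_rfl
      linarith
end

section
/- Let P be a finite partially ordered set and let v : P → ℝ be an isotone lower valuation. Then for all x, y, z ∈ P one has v⁻(x,y) + v⁻(y,z) ≤ v⁻(x,z) + v(y). -/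
/-- If `v` is an isotone lower valuation on a finite poset `P`, then
`v⁻(x,y) + v⁻(y,z) ≤ v⁻(x,z) + v y` for all `x y z`, where
`v⁻(x,y) = sup {v w : w ≤ x ∧ w ≤ y}`. -/
theorem stmt_4 {P : Type*} [Fintype P] [PartialOrder P] (v : P → ℝ)
    (hmono : Monotone v)
    (hlb : ∀ x y : P, ∃ w : P, w ≤ x ∧ w ≤ y)
    (hval : ∀ x y z : P, x ≤ z → y ≤ z →
      v x + v y ≤ sSup (v '' {w | w ≤ x ∧ w ≤ y}) + v z) :
    ∀ x y z : P,
      sSup (v '' {w | w ≤ x ∧ w ≤ y}) + sSup (v '' {w | w ≤ y ∧ w ≤ z}) ≤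
        sSup (v '' {w | w ≤ x ∧ w ≤ z}) + v y := by
  intro x y z
  have hne1 : (v '' {w | w ≤ x ∧ w ≤ y}).Nonempty := by
    obtain ⟨w, hw⟩ := hlb x y; exact ⟨v w, w, hw, rfl⟩
  have hne2 : (v '' {w | w ≤ y ∧ w ≤ z}).Nonempty := by
    obtain ⟨w, hw⟩ := hlb y z; exact ⟨v w, w, hw, rfl⟩
  obtain ⟨a, ⟨hax, hay⟩, ha⟩ := hne1.csSup_mem (Set.toFinite _)
  obtain ⟨b, ⟨hby, hbz⟩, hb⟩ := hne2.csSup_mem (Set.toFinite _)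
  have h := hval a b y hay hby
  have hsub : sSup (v '' {w | w ≤ a ∧ w ≤ b}) ≤ sSup (v '' {w | w ≤ x ∧ w ≤ z}) := by
    apply csSup_le_csSup (Set.Finite.bddAbove (Set.toFinite _))
    · obtain ⟨w, hw⟩ := hlb a b; exact ⟨v w, w, hw, rfl⟩
    · rintro _ ⟨w, ⟨hwa, hwb⟩, rfl⟩
      exact ⟨w, ⟨hwa.trans hax, hwb.trans hbz⟩, rfl⟩
  linarith [ha ▸ hb ▸ h]
end

section
/- Let L be a finite join-semilattice with a least element 0, and let v : L → ℝ be strictly isotone such that for all x, y ∈ L: v(x) + v(y) = v⁻(x,y) + v(x ⊔ y), where v⁻(x,y) = sup{v(z) : z ≤ x and z ≤ y} (the set of common lower bounds is nonempty since 0 is one). Then every pair of elements x, y ∈ L has a greatest lower bound x ⊓ y, one has v(x) + v(y) = v(x ⊓ y) + v(x ⊔ y) for all x, y, and the resulting lattice is modular: for all x, y, z ∈ L with x ≤ z, x ⊔ (y ⊓ z) = (x ⊔ y) ⊓ z. -/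
/-- Let `L` be a finite join-semilattice with least element `0` and let
`v : L → ℝ` be strictly isotone with `v x + v y = v⁻(x,y) + v (x ⊔ y)` for all `x, y`,
where `v⁻(x,y) = sup {v z : z ≤ x ∧ z ≤ y}`. Then every pair has a greatest lower
bound `x ⊓ y`, `v x + v y = v (x ⊓ y) + v (x ⊔ y)`, and the resulting lattice is
modular: `x ≤ z → x ⊔ (y ⊓ z) = (x ⊔ y) ⊓ z`. -/
theorem stmt_6 {L : Type*} [Fintype L] [SemilatticeSup L] [OrderBot L] (v : L → ℝ)
    (hstrict : StrictMono v)
    (hval : ∀ x y : L, v x + v y = sSup (v '' {z | z ≤ x ∧ z ≤ y}) + v (x ⊔ y)) :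
    (∀ x y : L, ∃ m : L, IsGLB {x, y} m ∧ v x + v y = v m + v (x ⊔ y)) ∧
    (∀ x y z a b : L, x ≤ z → IsGLB {y, z} a → IsGLB {x ⊔ y, z} b →
      x ⊔ a = b) := by
  classical
  have key : ∀ x y : L, ∃ m : L, IsGLB {x, y} m ∧ v x + v y = v m + v (x ⊔ y) := by
    intro x y
    set s : Finset L := Finset.univ.filter (fun z => z ≤ x ∧ z ≤ y) with hs
    set m : L := s.sup id with hm
    have hmem : ∀ z : L, z ∈ s ↔ z ≤ x ∧ z ≤ y := by
      intro z; simp [hs]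
    have hmx : m ≤ x := Finset.sup_le fun z hz => ((hmem z).1 hz).1
    have hmy : m ≤ y := Finset.sup_le fun z hz => ((hmem z).1 hz).2
    have hub : ∀ z : L, z ≤ x → z ≤ y → z ≤ m := by
      intro z h1 h2
      exact Finset.le_sup (f := id) ((hmem z).2 ⟨h1, h2⟩)
    have hglb : IsGLB ({x, y} : Set L) m := by
      constructor
      · intro w hw
        rcases hw with rfl | hw
        · exact hmx
        · simp only [Set.mem_singleton_iff] at hw; subst hw; exact hmy
      · intro w hw
        exact hub w (hw (by simp)) (hw (by simp))
    refine ⟨m, hglb, ?_⟩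
    have hsup : sSup (v '' {z | z ≤ x ∧ z ≤ y}) = v m := by
      apply IsGreatest.csSup_eq
      constructor
      · exact ⟨m, ⟨hmx, hmy⟩, rfl⟩
      · rintro t ⟨z, ⟨hz1, hz2⟩, rfl⟩
        exact hstrict.monotone (hub z hz1 hz2)
    rw [hval x y, hsup]
  refine ⟨key, ?_⟩
  intro x y z a b hxz ha hb
  -- a is lower bound for y and z
  have hay : a ≤ y := ha.1 (by simp)
  have haz : a ≤ z := ha.1 (by simp)
  -- equations
  obtain ⟨m, hm, e1⟩ := key x y
  have hmx : m ≤ x := hm.1 (by simp)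
  have hmy : m ≤ y := hm.1 (by simp)
  obtain ⟨m', hm', e2⟩ := key x a
  -- m = m'
  have hm'x : m' ≤ x := hm'.1 (by simp)
  have hm'a : m' ≤ a := hm'.1 (by simp)
  have hmm : m = m' := by
    apply le_antisymm
    · apply hm'.2
      intro w hw
      rcases hw with rfl | hw
      · exact hmx
      · simp only [Set.mem_singleton_iff] at hw; subst hw
        exact ha.2 (by rintro w (rfl | hw); · exact hmy
                       · simp only [Set.mem_singleton_iff] at hw; subst hw
                         exact hmx.trans hxz)
    · apply hm.2
      intro w hw
      rcases hw with rfl | hw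
      · exact hm'x
      · simp only [Set.mem_singleton_iff] at hw; subst hw; exact hm'a.trans hay
  obtain ⟨a', ha', e3⟩ := key y z
  have haa : a' = a := ha'.unique ha
  rw [haa] at e3
  obtain ⟨b', hb', e4⟩ := key (x ⊔ y) z
  have hbb : b' = b := hb'.unique hb
  rw [hbb] at e4
  have hsup3 : x ⊔ y ⊔ z = y ⊔ z := by
    rw [sup_right_comm, sup_eq_right.mpr hxz, sup_comm]
  rw [hsup3] at e4
  -- x ⊔ a ≤ b
  have hle : x ⊔ a ≤ b := by
    apply hb.2
    rintro w (rfl | hw)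
    · exact sup_le le_sup_left (hay.trans le_sup_right)
    · simp only [Set.mem_singleton_iff] at hw; subst hw
      exact sup_le hxz haz
  have hveq : v (x ⊔ a) = v b := by
    rw [← hmm] at e2
    linarith
  rcases hle.lt_or_eq with h | h
  · exact absurd (hstrict h) (by rw [hveq]; exact lt_irrefl _)
  · exact h
end

section
/- Let P be a finite bounded partially ordered set with Δ_∧(P) ≤ 1. Then v(x) = |↓x| is an isotone lower valuation on P: for all x, y, z ∈ P with x ≤ z and y ≤ z, |↓x| + |↓y| ≤ max{|↓w| : w ≤ x and w ≤ y} + |↓z|. -/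
/-- If `P` is a finite bounded poset with `Δ_∧(P) ≤ 1`, then
`v x = |↓x|` is an isotone lower valuation on `P`. -/
theorem stmt_12 {P : Type*} [Fintype P] [PartialOrder P] [BoundedOrder P]
    (Dmeet : P → P → ℝ) (Δmeet : ℝ)
    (hDmeet : ∀ x y : P, Dmeet x y =
      ({w | w ≤ x ∧ w ≤ y}.ncard : ℝ) -
        sSup ((fun z => ({w | w ≤ z}.ncard : ℝ)) ''
          {z | z ≤ x ∧ z ≤ y ∧ ∀ w : P, w ≤ x → w ≤ y → z ≤ w → z = w}))
    (hΔmeet : Δmeet = sSup {r | ∃ x y : P, Dmeet x y = r})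
    (hΔ : Δmeet ≤ 1) :
    Monotone (fun x : P => ({w | w ≤ x}.ncard : ℝ)) ∧
    (∀ x y z : P, x ≤ z → y ≤ z →
      ({w | w ≤ x}.ncard : ℝ) + ({w | w ≤ y}.ncard : ℝ) ≤
        sSup ((fun w => ({w' | w' ≤ w}.ncard : ℝ)) '' {w | w ≤ x ∧ w ≤ y}) +
          ({w | w ≤ z}.ncard : ℝ)) := by
  constructor
  · intro a b hab
    have h : {w : P | w ≤ a} ⊆ {w : P | w ≤ b} := fun w hw => le_trans hw hab
    simp only []
    exact_mod_cast Set.ncard_le_ncard h (Set.toFinite _)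
  · intro x y z hxz hyz
    set J : Set P := {w | w ≤ x ∧ w ≤ y} with hJ
    have hJne : J.Nonempty := ⟨⊥, bot_le, bot_le⟩
    obtain ⟨w0, hw0J, hw0max⟩ :=
      Set.Finite.exists_maximalFor id J (Set.toFinite _) hJne
    set Mset := (fun w : P => ({w' | w' ≤ w}.ncard : ℝ)) '' {w | w ≤ x ∧ w ≤ y} with hMset
    set Sset := (fun z : P => ({w | w ≤ z}.ncard : ℝ)) ''
      {z | z ≤ x ∧ z ≤ y ∧ ∀ w : P, w ≤ x → w ≤ y → z ≤ w → z = w} with hSset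
    have hMbdd : BddAbove Mset := (Set.toFinite _).bddAbove
    have hSne : Sset.Nonempty :=
      ⟨_, ⟨w0, ⟨hw0J.1, hw0J.2, fun w hwx hwy hle => le_antisymm hle (hw0max ⟨hwx, hwy⟩ hle)⟩, rfl⟩⟩
    have hSsub : Sset ⊆ Mset := by
      rintro r ⟨a, ⟨hax, hay, _⟩, rfl⟩
      exact ⟨a, ⟨hax, hay⟩, rfl⟩
    have hSM : sSup Sset ≤ sSup Mset := csSup_le_csSup hMbdd hSne hSsub
    have hDle : Dmeet x y ≤ 1 := by
      refine le_trans ?_ hΔ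
      rw [hΔmeet]
      have hset : {r | ∃ x y : P, Dmeet x y = r} =
          Set.range (fun p : P × P => Dmeet p.1 p.2) := by
        ext r
        constructor
        · rintro ⟨a, b, h⟩; exact ⟨(a, b), h⟩
        · rintro ⟨⟨a, b⟩, h⟩; exact ⟨a, b, h⟩
      rw [hset]
      exact le_csSup (Set.finite_range _).bddAbove ⟨(x, y), rfl⟩
    rw [hDmeet x y] at hDle
    have hJcard : (J.ncard : ℝ) ≤ sSup Sset + 1 := by
      rw [hJ]; linarith
    -- union / intersection cardinality identity
    have hinter : {w : P | w ≤ x} ∩ {w : P | w ≤ y} = J := by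
      ext w; simp [hJ]
    have hkey : (({w : P | w ≤ x} ∪ {w : P | w ≤ y}).ncard : ℝ) + (J.ncard : ℝ)
        = ({w : P | w ≤ x}.ncard : ℝ) + ({w : P | w ≤ y}.ncard : ℝ) := by
      have := Set.ncard_union_add_ncard_inter {w : P | w ≤ x} {w : P | w ≤ y}
        (Set.toFinite _) (Set.toFinite _)
      rw [hinter] at this
      exact_mod_cast this
    by_cases hzU : z ∈ {w : P | w ≤ x} ∪ {w : P | w ≤ y}
    · rcases hzU with hzx | hzy
      · have hxe : x = z := le_antisymm hxz hzx
        subst hxe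
        have hyx : y ≤ x := hyz
        have hyM : ({w : P | w ≤ y}.ncard : ℝ) ≤ sSup Mset :=
          le_csSup hMbdd ⟨y, ⟨hyx, le_refl y⟩, rfl⟩
        linarith
      · have hye : y = z := le_antisymm hyz hzy
        subst hye
        have hxy : x ≤ y := hxz
        have hxM : ({w : P | w ≤ x}.ncard : ℝ) ≤ sSup Mset :=
          le_csSup hMbdd ⟨x, ⟨le_refl x, hxy⟩, rfl⟩
        linarith
    · have hsub : {w : P | w ≤ x} ∪ {w : P | w ≤ y} ⊂ {w : P | w ≤ z} := by
        constructor
        · rintro w (hw | hw)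
          · exact le_trans hw hxz
          · exact le_trans hw hyz
        · intro hcon
          exact hzU (hcon (le_refl z))
      have hlt : ({w : P | w ≤ x} ∪ {w : P | w ≤ y}).ncard < {w : P | w ≤ z}.ncard :=
        Set.ncard_lt_ncard hsub (Set.toFinite _)
      have hlt' : (({w : P | w ≤ x} ∪ {w : P | w ≤ y}).ncard : ℝ) + 1 ≤
          ({w : P | w ≤ z}.ncard : ℝ) := by exact_mod_cast hlt
      linarith
end

section
/- Let P be a finite bounded partially ordered set with Δ_∨(P) ≤ 1. Then v(x) = |↑x| is an antitone lower valuation on P: for all x, y, z ∈ P with z ≤ x and z ≤ y, |↑x| + |↑y| ≤ |↑z| + max{|↑w| : x ≤ w and y ≤ w}. -/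
/-- If `P` is a finite bounded poset with `Δ_∨(P) ≤ 1`, then
`v x = |↑x|` is an antitone lower valuation on `P`. -/
theorem stmt_13 {P : Type*} [Fintype P] [PartialOrder P] [BoundedOrder P]
    (Djoin : P → P → ℝ) (Δjoin : ℝ)
    (hDjoin : ∀ x y : P, Djoin x y =
      ({w | x ≤ w ∧ y ≤ w}.ncard : ℝ) -
        sInf ((fun z => ({w | z ≤ w}.ncard : ℝ)) ''
          {z | x ≤ z ∧ y ≤ z ∧ ∀ w : P, x ≤ w → y ≤ w → w ≤ z → z = w}))
    (hΔjoin : Δjoin = sSup {r | ∃ x y : P, Djoin x y = r})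
    (hΔ : Δjoin ≤ 1) :
    Antitone (fun x : P => ({w | x ≤ w}.ncard : ℝ)) ∧
    (∀ x y z : P, z ≤ x → z ≤ y →
      ({w | x ≤ w}.ncard : ℝ) + ({w | y ≤ w}.ncard : ℝ) ≤
        ({w | z ≤ w}.ncard : ℝ) +
          sSup ((fun w => ({w' | w ≤ w'}.ncard : ℝ)) '' {w | x ≤ w ∧ y ≤ w})) := by
  constructor
  · intro a b hab
    simp only
    have hsub : {w : P | b ≤ w} ⊆ {w : P | a ≤ w} := fun w hw => le_trans hab hw
    exact_mod_cast Set.ncard_le_ncard hsub (Set.toFinite _)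
  · intro x y z hzx hzy
    set U : Set P := {w | x ≤ w ∧ y ≤ w} with hU
    have hUne : U.Nonempty := ⟨⊤, le_top, le_top⟩
    have hUfin : U.Finite := Set.toFinite _
    have hsup : ∀ w ∈ U, ({w' | w ≤ w'}.ncard : ℝ) ≤
        sSup ((fun w => ({w' | w ≤ w'}.ncard : ℝ)) '' U) := fun w hw =>
      le_csSup ((hUfin.image _).bddAbove) (Set.mem_image_of_mem _ hw)
    by_cases hzx' : z = x
    · subst hzx'
      have hy : y ∈ U := ⟨hzy, le_refl y⟩
      have := hsup y hy
      linarith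
    by_cases hzy' : z = y
    · subst hzy'
      have hx : x ∈ U := ⟨le_refl x, hzx⟩
      have := hsup x hx
      linarith
    -- main case: z < x and z < y
    -- Djoin x y ≤ 1
    have hbdd : BddAbove {r | ∃ x y : P, Djoin x y = r} := by
      refine ⟨(Fintype.card P : ℝ), ?_⟩
      rintro r ⟨a, b, rfl⟩
      rw [hDjoin]
      have h1 : 0 ≤ sInf ((fun z => ({w | z ≤ w}.ncard : ℝ)) ''
          {z | a ≤ z ∧ b ≤ z ∧ ∀ w : P, a ≤ w → b ≤ w → w ≤ z → z = w}) := by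
        apply Real.sInf_nonneg
        rintro r ⟨c, -, rfl⟩
        positivity
      have h2 : ({w | a ≤ w ∧ b ≤ w}.ncard : ℝ) ≤ Fintype.card P := by
        have := Set.ncard_le_ncard (Set.subset_univ {w | a ≤ w ∧ b ≤ w}) Set.finite_univ
        rw [Set.ncard_univ, Nat.card_eq_fintype_card] at this
        exact_mod_cast this
      linarith
    have hD1 : Djoin x y ≤ 1 := (le_csSup hbdd ⟨x, y, rfl⟩).trans (hΔjoin ▸ hΔ)
    -- there is a minimal element m of U achieving the infimum
    set Z : Set P := {z | x ≤ z ∧ y ≤ z ∧ ∀ w : P, x ≤ w → y ≤ w → w ≤ z → z = w} with hZ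
    have hZne : Z.Nonempty := by
      obtain ⟨m, hm, hmin⟩ := hUfin.exists_minimal hUne
      exact ⟨m, hm.1, hm.2, fun w hw1 hw2 hwm => le_antisymm (hmin ⟨hw1, hw2⟩ hwm) hwm⟩
    set S : Set ℝ := (fun z => ({w | z ≤ w}.ncard : ℝ)) '' Z with hS
    have hSne : S.Nonempty := hZne.image _
    have hSfin : S.Finite := (Set.toFinite Z).image _
    obtain ⟨m, hmZ, hmS⟩ := hSne.csInf_mem hSfin
    have hmU : m ∈ U := ⟨hmZ.1, hmZ.2.1⟩
    have hinf : (U.ncard : ℝ) - sInf S ≤ 1 := by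
      rw [hDjoin] at hD1; exact hD1
    -- strict inclusion of union in ↑z
    have hzx2 : z < x := lt_of_le_of_ne hzx hzx'
    have hzy2 : z < y := lt_of_le_of_ne hzy hzy'
    have hssub : {w : P | x ≤ w} ∪ {w : P | y ≤ w} ⊂ {w : P | z ≤ w} := by
      constructor
      · rintro w (hw | hw)
        · exact le_trans hzx hw
        · exact le_trans hzy hw
      · intro hsub
        have hz : z ∈ {w : P | x ≤ w} ∪ {w : P | y ≤ w} := hsub (le_refl z)
        rcases hz with hz | hz
        · exact absurd (le_antisymm hzx hz) hzx'
        · exact absurd (le_antisymm hzy hz) hzy'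
    have hcard : ({w : P | x ≤ w} ∪ {w : P | y ≤ w}).ncard + 1 ≤ {w : P | z ≤ w}.ncard :=
      Set.ncard_lt_ncard hssub (Set.toFinite _)
    have hie : ({w : P | x ≤ w} ∪ {w : P | y ≤ w}).ncard + U.ncard
        = {w : P | x ≤ w}.ncard + {w : P | y ≤ w}.ncard := by
      have := Set.ncard_union_add_ncard_inter {w : P | x ≤ w} {w : P | y ≤ w}
        (Set.toFinite _) (Set.toFinite _)
      have hinter : {w : P | x ≤ w} ∩ {w : P | y ≤ w} = U := rfl
      rw [hinter] at this
      exact this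
    have hcR : (({w : P | x ≤ w} ∪ {w : P | y ≤ w}).ncard : ℝ) + 1 ≤
        ({w : P | z ≤ w}.ncard : ℝ) := by exact_mod_cast hcard
    have hieR : (({w : P | x ≤ w} ∪ {w : P | y ≤ w}).ncard : ℝ) + (U.ncard : ℝ)
        = ({w : P | x ≤ w}.ncard : ℝ) + ({w : P | y ≤ w}.ncard : ℝ) := by exact_mod_cast hie
    have hm2 := hsup m hmU
    have hmS' : ({w' | m ≤ w'}.ncard : ℝ) = sInf S := hmS
    rw [hmS'] at hm2
    linarith
end

section
/- Let G be a group and let ℒ be the set of finite subgroups of G. Then d(X,Y) = log(|X| · |Y|) − 2·log|X ∩ Y| defines a metric on ℒ: for all finite subgroups X, Y, Z of G, d(X,Y) ≥ 0, d(X,Y) = d(Y,X), d(X,Z) ≤ d(X,Y) + d(Y,Z), and d(X,Y) = 0 if and only if X = Y. -/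
open Subgroup

lemma aux_card_relIndex {G : Type*} [Group G] (B Y : Subgroup G) (h : B ≤ Y) :
    Nat.card B * B.relIndex Y = Nat.card Y := by
  have := relIndex_mul_relIndex (⊥ : Subgroup G) B Y bot_le h
  rwa [relIndex_bot_left, relIndex_bot_left] at this

lemma aux_key {G : Type*} [Group G] (X Y Z : Subgroup G) [Finite X] [Finite Y] :
    Nat.card (X ⊓ Y : Subgroup G) * Nat.card (Y ⊓ Z : Subgroup G)
      ≤ Nat.card Y * Nat.card (X ⊓ Z : Subgroup G) := by
  set A := X ⊓ Y with hA
  set B := Y ⊓ Z with hB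
  have hAY : A ≤ Y := inf_le_right
  have hBY : B ≤ Y := inf_le_left
  have hBYne : B.relIndex Y ≠ 0 := by
    have : Finite (Y ⧸ (B.subgroupOf Y)) := Quotient.finite _
    exact Subgroup.index_ne_zero_of_finite
  have h1 : Nat.card (A ⊓ B : Subgroup G) * B.relIndex A = Nat.card A := by
    have hrel : (A ⊓ B).relIndex A = B.relIndex A := by
      rw [inf_comm A B, inf_relIndex_right]
    have := relIndex_mul_relIndex (⊥ : Subgroup G) (A ⊓ B) A bot_le inf_le_left
    rwa [relIndex_bot_left, relIndex_bot_left, hrel] at this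
  have h2 : B.relIndex A ≤ B.relIndex Y := relIndex_le_of_le_right hAY hBYne
  have h3 : Nat.card B * B.relIndex Y = Nat.card Y := aux_card_relIndex B Y hBY
  have h4 : (A ⊓ B : Subgroup G) ≤ X ⊓ Z := by
    rw [hA, hB]
    exact le_inf (inf_le_left.trans inf_le_left) (inf_le_right.trans inf_le_right)
  have hXZfin : Finite (X ⊓ Z : Subgroup G) :=
    Finite.of_injective (Subgroup.inclusion (inf_le_left : X ⊓ Z ≤ X))
      (Subgroup.inclusion_injective _)
  calc Nat.card A * Nat.card B
      = Nat.card (A ⊓ B : Subgroup G) * B.relIndex A * Nat.card B := by rw [h1]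
    _ ≤ Nat.card (A ⊓ B : Subgroup G) * B.relIndex Y * Nat.card B := by
        exact Nat.mul_le_mul_right _ (Nat.mul_le_mul_left _ h2)
    _ = Nat.card (A ⊓ B : Subgroup G) * (Nat.card B * B.relIndex Y) := by ring
    _ = Nat.card (A ⊓ B : Subgroup G) * Nat.card Y := by rw [h3]
    _ ≤ Nat.card (X ⊓ Z : Subgroup G) * Nat.card Y :=
        Nat.mul_le_mul_right _ (Subgroup.card_le_of_le h4)
    _ = Nat.card Y * Nat.card (X ⊓ Z : Subgroup G) := Nat.mul_comm _ _

/-- On the collection of finite subgroups of a group `G`,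
`d(X,Y) = log(|X|·|Y|) - 2·log|X ∩ Y|` is a metric. -/
theorem stmt_17 {G : Type*} [Group G]
    (d : Subgroup G → Subgroup G → ℝ)
    (hd : ∀ X Y : Subgroup G,
      d X Y = Real.log ((Nat.card X : ℝ) * (Nat.card Y : ℝ)) -
        2 * Real.log (Nat.card (X ⊓ Y : Subgroup G) : ℝ)) :
    ∀ X Y Z : Subgroup G, (X : Set G).Finite → (Y : Set G).Finite →
      (Z : Set G).Finite →
      0 ≤ d X Y ∧ d X Y = d Y X ∧ d X Z ≤ d X Y + d Y Z ∧ (d X Y = 0 ↔ X = Y) := by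
  intro X Y Z hX hY hZ
  haveI : Finite X := hX.to_subtype
  haveI : Finite Y := hY.to_subtype
  haveI : Finite Z := hZ.to_subtype
  -- cardinalities are positive
  have cpos : ∀ (W : Subgroup G), Finite W → (0:ℝ) < (Nat.card W : ℝ) := fun W hW => by
    exact_mod_cast (Nat.card_pos (α := W))
  have finInf : ∀ (U V : Subgroup G), Finite U → Finite (U ⊓ V : Subgroup G) := by
    intro U V hU
    exact Finite.of_injective (Subgroup.inclusion (inf_le_left : U ⊓ V ≤ U))
      (Subgroup.inclusion_injective _)
  have pX := cpos X ‹_›; have pY := cpos Y ‹_›; have pZ := cpos Z ‹_›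
  have pXY := cpos _ (finInf X Y ‹_›)
  have pYX := cpos _ (finInf Y X ‹_›)
  have pXZ := cpos _ (finInf X Z ‹_›)
  have pYZ := cpos _ (finInf Y Z ‹_›)
  -- split logs
  have dsplit : ∀ (U V : Subgroup G), (0:ℝ) < Nat.card U → (0:ℝ) < Nat.card V →
      d U V = Real.log (Nat.card U : ℝ) + Real.log (Nat.card V : ℝ) -
        2 * Real.log (Nat.card (U ⊓ V : Subgroup G) : ℝ) := by
    intro U V hU hV
    rw [hd, Real.log_mul (ne_of_gt hU) (ne_of_gt hV)]
  -- monotonicity of card under ≤, and of log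
  have logle : ∀ {m n : ℕ}, 0 < m → m ≤ n → Real.log m ≤ Real.log n := by
    intro m n h0 h
    exact Real.log_le_log (by exact_mod_cast h0) (by exact_mod_cast h)
  have cardle : ∀ (U V : Subgroup G), Finite V → U ≤ V → Nat.card U ≤ Nat.card V := by
    intro U V hV h
    exact Subgroup.card_le_of_le h
  -- nonneg
  have hXYleX : Nat.card (X ⊓ Y : Subgroup G) ≤ Nat.card X := cardle _ _ ‹_› inf_le_left
  have hXYleY : Nat.card (X ⊓ Y : Subgroup G) ≤ Nat.card Y := cardle _ _ ‹_› inf_le_right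
  have nonneg : 0 ≤ d X Y := by
    rw [dsplit X Y pX pY]
    have l1 := logle (by exact_mod_cast pXY) hXYleX
    have l2 := logle (by exact_mod_cast pXY) hXYleY
    linarith
  -- symmetry
  have symm : d X Y = d Y X := by
    rw [dsplit X Y pX pY, dsplit Y X pY pX, inf_comm Y X]
    ring
  -- triangle
  have tri : d X Z ≤ d X Y + d Y Z := by
    rw [dsplit X Z pX pZ, dsplit X Y pX pY, dsplit Y Z pY pZ]
    have key := aux_key X Y Z
    have keyR : (Nat.card (X ⊓ Y : Subgroup G) : ℝ) * Nat.card (Y ⊓ Z : Subgroup G)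
        ≤ (Nat.card Y : ℝ) * Nat.card (X ⊓ Z : Subgroup G) := by exact_mod_cast key
    have hlog := Real.log_le_log (by positivity) keyR
    rw [Real.log_mul (ne_of_gt pXY) (ne_of_gt pYZ),
        Real.log_mul (ne_of_gt pY) (ne_of_gt pXZ)] at hlog
    linarith
  -- zero iff eq
  have zero_iff : d X Y = 0 ↔ X = Y := by
    constructor
    · intro h
      rw [dsplit X Y pX pY] at h
      -- log X + log Y = 2 log (X⊓Y); with log(X⊓Y) ≤ log X, log Y, forces equality
      have l1 := logle (by exact_mod_cast pXY) hXYleX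
      have l2 := logle (by exact_mod_cast pXY) hXYleY
      have e1 : Real.log (Nat.card X : ℝ) = Real.log (Nat.card (X ⊓ Y : Subgroup G) : ℝ) := by
        linarith
      have e2 : Real.log (Nat.card Y : ℝ) = Real.log (Nat.card (X ⊓ Y : Subgroup G) : ℝ) := by
        linarith
      have c1 : Nat.card X = Nat.card (X ⊓ Y : Subgroup G) := by
        have := Real.log_injOn_pos (Set.mem_Ioi.mpr pX) (Set.mem_Ioi.mpr pXY) e1
        exact_mod_cast this
      have c2 : Nat.card Y = Nat.card (X ⊓ Y : Subgroup G) := by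
        have := Real.log_injOn_pos (Set.mem_Ioi.mpr pY) (Set.mem_Ioi.mpr pXY) e2
        exact_mod_cast this
      have hX' : X ⊓ Y = X := Subgroup.eq_of_le_of_card_ge inf_le_left c1.le
      have hY' : X ⊓ Y = Y := Subgroup.eq_of_le_of_card_ge inf_le_right c2.le
      rw [← hX', hY']
    · rintro rfl
      rw [dsplit X X pX pX, inf_idem]
      ring
  exact ⟨nonneg, symm, tri, zero_iff⟩
end

section
/- Let P be a finite partially ordered set. (i) If u : P → ℝ is an isotone upper valuation with u(x) > 0 for all x ∈ P, then ℓ(x) = log u(x) is an isotone upper valuation: for all x, y, z ∈ P with z ≤ x and z ≤ y, inf{log u(w) : x ≤ w and y ≤ w} + log u(z) ≤ log u(x) + log u(y). (ii) If u : P → ℝ is an antitone upper valuation with u(x) > 0 for all x ∈ P, then ℓ(x) = log u(x) is an antitone upper valuation: for all x, y, z ∈ P with x ≤ z and y ≤ z, inf{log u(w) : w ≤ x and w ≤ y} + log u(z) ≤ log u(x) + log u(y). -/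
lemma stmt_18_key (a b c d : ℝ) (ha : 0 < a) (hb : 0 < b) (hc : 0 < c)
    (hd : 0 < d) (h1 : a + d ≤ b + c) (h2 : d ≤ b) (h3 : d ≤ c) :
    Real.log a + Real.log d ≤ Real.log b + Real.log c := by
  rw [← Real.log_mul ha.ne' hd.ne', ← Real.log_mul hb.ne' hc.ne']
  apply Real.log_le_log (by positivity)
  nlinarith [mul_nonneg (sub_nonneg.2 h2) (sub_nonneg.2 h3)]

/-- On a finite poset `P`: (i) if `u` is a strictly positive isotone
upper valuation then `log ∘ u` is an isotone upper valuation; (ii) if `u` is a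
strictly positive antitone upper valuation then `log ∘ u` is an antitone upper
valuation. -/
theorem stmt_18 {P : Type*} [Fintype P] [PartialOrder P] :
    (∀ u : P → ℝ, Monotone u → (∀ x : P, 0 < u x) →
      (∀ x y : P, ∃ w : P, x ≤ w ∧ y ≤ w) →
      (∀ x y z : P, z ≤ x → z ≤ y →
        sInf (u '' {w | x ≤ w ∧ y ≤ w}) + u z ≤ u x + u y) →
      (Monotone (fun x : P => Real.log (u x)) ∧
       ∀ x y z : P, z ≤ x → z ≤ y →
        sInf ((fun w => Real.log (u w)) '' {w | x ≤ w ∧ y ≤ w}) + Real.log (u z) ≤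
          Real.log (u x) + Real.log (u y))) ∧
    (∀ u : P → ℝ, Antitone u → (∀ x : P, 0 < u x) →
      (∀ x y : P, ∃ w : P, w ≤ x ∧ w ≤ y) →
      (∀ x y z : P, x ≤ z → y ≤ z →
        sInf (u '' {w | w ≤ x ∧ w ≤ y}) + u z ≤ u x + u y) →
      (Antitone (fun x : P => Real.log (u x)) ∧
       ∀ x y z : P, x ≤ z → y ≤ z →
        sInf ((fun w => Real.log (u w)) '' {w | w ≤ x ∧ w ≤ y}) + Real.log (u z) ≤
          Real.log (u x) + Real.log (u y))) := by
  constructor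
  · intro u hmono hpos hub hval
    refine ⟨fun a b hab => Real.log_le_log (hpos a) (hmono hab), ?_⟩
    intro x y z hzx hzy
    have hSne : (u '' {w | x ≤ w ∧ y ≤ w}).Nonempty := by
      obtain ⟨w, hw⟩ := hub x y
      exact ⟨u w, w, hw, rfl⟩
    obtain ⟨w0, hw0, heq⟩ := hSne.csInf_mem (Set.toFinite _)
    have h1 : u w0 + u z ≤ u x + u y := by rw [heq]; exact hval x y z hzx hzy
    have hle : sInf ((fun w => Real.log (u w)) '' {w | x ≤ w ∧ y ≤ w}) ≤
        Real.log (u w0) :=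
      csInf_le (Set.Finite.bddBelow (Set.toFinite _)) ⟨w0, hw0, rfl⟩
    calc sInf ((fun w => Real.log (u w)) '' {w | x ≤ w ∧ y ≤ w}) + Real.log (u z)
        ≤ Real.log (u w0) + Real.log (u z) := by linarith
      _ ≤ Real.log (u x) + Real.log (u y) :=
        stmt_18_key _ _ _ _ (hpos w0) (hpos x) (hpos y) (hpos z) h1
          (hmono hzx) (hmono hzy)
  · intro u hanti hpos hlb hval
    refine ⟨fun a b hab => Real.log_le_log (hpos b) (hanti hab), ?_⟩
    intro x y z hxz hyz
    have hSne : (u '' {w | w ≤ x ∧ w ≤ y}).Nonempty := by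
      obtain ⟨w, hw⟩ := hlb x y
      exact ⟨u w, w, hw, rfl⟩
    obtain ⟨w0, hw0, heq⟩ := hSne.csInf_mem (Set.toFinite _)
    have h1 : u w0 + u z ≤ u x + u y := by rw [heq]; exact hval x y z hxz hyz
    have hle : sInf ((fun w => Real.log (u w)) '' {w | w ≤ x ∧ w ≤ y}) ≤
        Real.log (u w0) :=
      csInf_le (Set.Finite.bddBelow (Set.toFinite _)) ⟨w0, hw0, rfl⟩
    calc sInf ((fun w => Real.log (u w)) '' {w | w ≤ x ∧ w ≤ y}) + Real.log (u z)
        ≤ Real.log (u w0) + Real.log (u z) := by linarith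
      _ ≤ Real.log (u x) + Real.log (u y) :=
        stmt_18_key _ _ _ _ (hpos w0) (hpos x) (hpos y) (hpos z) h1
          (hanti hxz) (hanti hyz)
end

section
/- Let P be a finite partially ordered set. (i) If u : P → ℝ is an isotone upper valuation, K > 0, and A ∈ ℝ satisfies K·u(x) + A > 0 for all x ∈ P, then L(x) = log(K·u(x) + A) is an isotone upper valuation. (ii) If v : P → ℝ is an isotone lower valuation, K < 0, and A ∈ ℝ satisfies K·v(x) + A > 0 for all x ∈ P, then L'(x) = −log(K·v(x) + A) is an isotone lower valuation: for all x, y, z ∈ P with x ≤ z and y ≤ z, L'(x) + L'(y) ≤ sup{L'(w) : w ≤ x and w ≤ y} + L'(z). -/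
/-- Key log inequality: if `a + d ≤ b + c`, `d ≤ b`, `d ≤ c`, all positive,
then `log a + log d ≤ log b + log c`. -/
lemma log_key {a b c d : ℝ} (ha : 0 < a) (hb : 0 < b) (hc : 0 < c) (hd : 0 < d)
    (hdb : d ≤ b) (hdc : d ≤ c) (hsum : a + d ≤ b + c) :
    Real.log a + Real.log d ≤ Real.log b + Real.log c := by
  rw [← Real.log_mul ha.ne' hd.ne', ← Real.log_mul hb.ne' hc.ne']
  apply Real.log_le_log (by positivity)
  nlinarith [mul_nonneg (sub_nonneg.2 hdb) (sub_nonneg.2 hdc)]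

/-- On a finite poset `P`: (i) if `u` is an isotone upper valuation,
`K > 0`, and `K·u(x) + A > 0` for all `x`, then `L x = log (K·u(x) + A)` is an
isotone upper valuation; (ii) if `v` is an isotone lower valuation, `K < 0`, and
`K·v(x) + A > 0` for all `x`, then `L' x = -log (K·v(x) + A)` is an isotone lower
valuation. -/
theorem stmt_19 {P : Type*} [Fintype P] [PartialOrder P] :
    (∀ (u : P → ℝ) (K A : ℝ), Monotone u → 0 < K → (∀ x : P, 0 < K * u x + A) →
      (∀ x y : P, ∃ w : P, x ≤ w ∧ y ≤ w) →
      (∀ x y z : P, z ≤ x → z ≤ y →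
        sInf (u '' {w | x ≤ w ∧ y ≤ w}) + u z ≤ u x + u y) →
      (Monotone (fun x : P => Real.log (K * u x + A)) ∧
       ∀ x y z : P, z ≤ x → z ≤ y →
        sInf ((fun w => Real.log (K * u w + A)) '' {w | x ≤ w ∧ y ≤ w}) +
            Real.log (K * u z + A) ≤
          Real.log (K * u x + A) + Real.log (K * u y + A))) ∧
    (∀ (v : P → ℝ) (K A : ℝ), Monotone v → K < 0 → (∀ x : P, 0 < K * v x + A) →
      (∀ x y : P, ∃ w : P, w ≤ x ∧ w ≤ y) →
      (∀ x y z : P, x ≤ z → y ≤ z →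
        v x + v y ≤ sSup (v '' {w | w ≤ x ∧ w ≤ y}) + v z) →
      (Monotone (fun x : P => -Real.log (K * v x + A)) ∧
       ∀ x y z : P, x ≤ z → y ≤ z →
        (-Real.log (K * v x + A)) + (-Real.log (K * v y + A)) ≤
          sSup ((fun w => -Real.log (K * v w + A)) '' {w | w ≤ x ∧ w ≤ y}) +
            (-Real.log (K * v z + A)))) := by
  constructor
  · intro u K A hu hK hpos hub hval
    constructor
    · intro a b hab
      apply Real.log_le_log (hpos a)
      have := hu hab
      nlinarith
    · intro x y z hzx hzy
      set S : Set P := {w | x ≤ w ∧ y ≤ w} with hS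
      have hSne : S.Nonempty := by obtain ⟨w, hw⟩ := hub x y; exact ⟨w, hw⟩
      have hfin : (u '' S).Finite := (Set.toFinite S).image u
      have hmem : sInf (u '' S) ∈ u '' S :=
        (hSne.image u).csInf_mem hfin
      obtain ⟨w₀, hw₀S, hw₀⟩ := hmem
      have h1 : sInf ((fun w => Real.log (K * u w + A)) '' S) ≤
          Real.log (K * u w₀ + A) :=
        csInf_le ((Set.toFinite S).image _).bddBelow ⟨w₀, hw₀S, rfl⟩
      have h2 : u w₀ + u z ≤ u x + u y := by
        rw [hw₀]; exact hval x y z hzx hzy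
      have hkey := log_key (hpos w₀) (hpos x) (hpos y) (hpos z)
        (by nlinarith [hu hzx]) (by nlinarith [hu hzy]) (by nlinarith)
      linarith
  · intro v K A hv hK hpos hlb hval
    constructor
    · intro a b hab
      simp only [neg_le_neg_iff]
      apply Real.log_le_log (hpos b)
      have := hv hab
      nlinarith
    · intro x y z hxz hyz
      set T : Set P := {w | w ≤ x ∧ w ≤ y} with hT
      have hTne : T.Nonempty := by obtain ⟨w, hw⟩ := hlb x y; exact ⟨w, hw⟩
      have hfin : (v '' T).Finite := (Set.toFinite T).image v
      have hmem : sSup (v '' T) ∈ v '' T :=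
        (hTne.image v).csSup_mem hfin
      obtain ⟨w₀, hw₀T, hw₀⟩ := hmem
      have h1 : -Real.log (K * v w₀ + A) ≤
          sSup ((fun w => -Real.log (K * v w + A)) '' T) :=
        le_csSup ((Set.toFinite T).image _).bddAbove ⟨w₀, hw₀T, rfl⟩
      have h2 : v x + v y ≤ v w₀ + v z := by
        rw [hw₀]; exact hval x y z hxz hyz
      have hkey := log_key (hpos w₀) (hpos x) (hpos y) (hpos z)
        (by nlinarith [hv hxz]) (by nlinarith [hv hyz]) (by nlinarith)
      linarith
end
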